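/- arXiv:2412.12026 — 2 statements merged into one kernel-verified Lean document; each statement's English description precedes it below -/
import Mathlib

section
/- Fix d∈ℕ, reals 0<θ₁<…<θ_d<θ_{d+1}=1 and reals 0<u_j<v_j for j=1,…,d+1. Let N∈ℕ, N≥2, satisfy ⌊u_jN⌋ ≥ ⌈N^{3/4}⌉ for all j=1,…,d+1 and ⌊v_{d+1}N⌋ − ⌊u_jN⌋ + ⌈N^{3/4}⌉ ≤ N − ⌊θ_jN⌋ for all j=1,…,d. Let λ₁ be a Bernoulli path on {0,…,N} with λ₁(0)=0 and λ₁(⌊θ_jN⌋) ∈ [⌊u_jN⌋, ⌊v_jN⌋] for j=1,…,d+1, and let x,y∈ℤ be such that Ω(N,x,y,λ₁,−∞) is nonempty. Then P^{N,x,y,λ₁,−∞}( L(⌊θ_jN⌋) ≤ λ₁(⌊θ_jN⌋) − ⌈N^{3/4}⌉ for all j=1,…,d ) ≥ N^{−2d⌈N^{3/4}⌉}. -/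
/-- A Bernoulli path on `{0,…,N}`: increments in `{0,1}`. -/
def IsBPath (N : ℕ) (L : Fin (N+1) → ℤ) : Prop :=
  ∀ j : Fin N, L j.succ = L j.castSucc ∨ L j.succ = L j.castSucc + 1

/-- `Ω(N,x,y,f,g)`: Bernoulli paths from `x` to `y` staying below the barrier `f`
and above the barrier `g`. -/
def pathSetB (N : ℕ) (x y : ℤ) (f : Fin (N+1) → WithTop ℤ) (g : Fin (N+1) → WithBot ℤ) :
    Set (Fin (N+1) → ℤ) :=
  {L | IsBPath N L ∧ L 0 = x ∧ L (Fin.last N) = y ∧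
    (∀ j, (L j : WithTop ℤ) ≤ f j) ∧ (∀ j, g j ≤ (L j : WithBot ℤ))}

/-- Probability of the event `A` under the uniform measure on the finite set `Ω`. -/
noncomputable def unifProb {X : Type*} (Ω A : Set X) : ℝ :=
  ((Ω ∩ A).ncard : ℝ) / (Ω.ncard : ℝ)

/-- The element of `Fin (N+1)` with value `k` (clamped at `N`; in all uses `k ≤ N`). -/
def idxN (N k : ℕ) : Fin (N+1) := ⟨min k N, by omega⟩

lemma idxN_val_of_le {N k : ℕ} (h : k ≤ N) : ((idxN N k : Fin (N+1)) : ℕ) = k := by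
  simp [idxN]; omega

lemma idxN_self {N : ℕ} (i : Fin (N+1)) : idxN N (i : ℕ) = i := by
  apply Fin.ext; simp [idxN]; omega

lemma idxN_zero {N : ℕ} : idxN N 0 = 0 := by apply Fin.ext; simp [idxN]

lemma idxN_last {N : ℕ} : idxN N N = Fin.last N := by apply Fin.ext; simp [idxN]

lemma bstep {N : ℕ} {L : Fin (N+1) → ℤ} (hL : IsBPath N L) (k : ℕ) :
    L (idxN N (k+1)) = L (idxN N k) ∨ L (idxN N (k+1)) = L (idxN N k) + 1 := by
  rcases Nat.lt_or_ge k N with h | h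
  · have e1 : idxN N (k+1) = (⟨k, h⟩ : Fin N).succ := by
      apply Fin.ext; simp [idxN, Fin.val_succ]; omega
    have e2 : idxN N k = (⟨k, h⟩ : Fin N).castSucc := by
      apply Fin.ext; simp [idxN]; omega
    rw [e1, e2]; exact hL ⟨k, h⟩
  · have e : idxN N (k+1) = idxN N k := by
      apply Fin.ext; simp [idxN]; omega
    rw [e]; exact Or.inl rfl

lemma bmono {N : ℕ} {L : Fin (N+1) → ℤ} (hL : IsBPath N L) :
    Monotone (fun k : ℕ => L (idxN N k)) := by
  apply monotone_nat_of_le_succ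
  intro k
  rcases bstep hL k with h | h
  · rw [h]
  · rw [h]; linarith

lemma bub {N : ℕ} {L : Fin (N+1) → ℤ} (hL : IsBPath N L) (k : ℕ) :
    L (idxN N k) ≤ L (idxN N 0) + (k : ℤ) := by
  induction k with
  | zero => simp
  | succ k ih =>
    rcases bstep hL k with h | h <;> rw [h] <;> push_cast <;> linarith

lemma exists_up {N : ℕ} {L : Fin (N+1) → ℤ} (hL : IsBPath N L) :
    ∀ b a : ℕ, a ≤ b → L (idxN N a) < L (idxN N b) →
    ∃ p, a < p ∧ p ≤ b ∧ L (idxN N p) = L (idxN N (p - 1)) + 1 := by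
  intro b
  induction b with
  | zero =>
    intro a ha h
    obtain rfl : a = 0 := Nat.le_zero.mp ha
    exact absurd h (lt_irrefl _)
  | succ b ih =>
    intro a ha h
    by_cases hab : a = b + 1
    · subst hab; exact absurd h (lt_irrefl _)
    have ha' : a ≤ b := by omega
    rcases bstep hL b with he | hu
    · rw [he] at h
      obtain ⟨p, h1, h2, h3⟩ := ih a ha' h
      exact ⟨p, h1, Nat.le_succ_of_le h2, h3⟩
    · refine ⟨b+1, by omega, le_rfl, ?_⟩
      simpa using hu

lemma exists_flat {N : ℕ} {L : Fin (N+1) → ℤ} (hL : IsBPath N L) :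
    ∀ b a : ℕ, a ≤ b → L (idxN N b) - L (idxN N a) < (b : ℤ) - (a : ℤ) →
    ∃ q, a < q ∧ q ≤ b ∧ L (idxN N q) = L (idxN N (q - 1)) := by
  intro b
  induction b with
  | zero =>
    intro a ha h
    obtain rfl : a = 0 := Nat.le_zero.mp ha
    simp at h
  | succ b ih =>
    intro a ha h
    by_cases hab : a = b + 1
    · subst hab; simp at h
    have ha' : a ≤ b := by omega
    rcases bstep hL b with he | hu
    · exact ⟨b+1, by omega, le_rfl, by simpa using he⟩
    · rw [hu] at h
      obtain ⟨q, h1, h2, h3⟩ := ih a ha' (by push_cast at h ⊢; linarith)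
      exact ⟨q, h1, Nat.le_succ_of_le h2, h3⟩

def flipP (N : ℕ) (L : Fin (N+1) → ℤ) (p q : ℕ) : Fin (N+1) → ℤ :=
  fun i => if p ≤ (i : ℕ) ∧ (i : ℕ) < q then L i - 1 else L i

lemma flipP_le {N : ℕ} (L : Fin (N+1) → ℤ) (p q : ℕ) (i : Fin (N+1)) :
    flipP N L p q i ≤ L i := by
  unfold flipP; split <;> linarith

lemma flip_recover {N : ℕ} (L : Fin (N+1) → ℤ) (p q : ℕ) :
    (fun i : Fin (N+1) => if p ≤ (i : ℕ) ∧ (i : ℕ) < q then flipP N L p q i + 1 else flipP N L p q i) = L := by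
  funext i
  simp only [flipP]
  split_ifs with h
  · ring
  · rfl

lemma flip_isBPath {N : ℕ} {L : Fin (N+1) → ℤ} (hL : IsBPath N L) {p q : ℕ}
    (hp : 1 ≤ p) (hpq : p < q) (hqN : q ≤ N)
    (hup : L (idxN N p) = L (idxN N (p-1)) + 1)
    (hflat : L (idxN N q) = L (idxN N (q-1))) :
    IsBPath N (flipP N L p q) := by
  intro j
  have hj := hL j
  have hjN : (j : ℕ) < N := j.isLt
  have hsv : ((j.succ : Fin (N+1)) : ℕ) = (j : ℕ) + 1 := rfl
  have hcv : ((j.castSucc : Fin (N+1)) : ℕ) = (j : ℕ) := rfl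
  simp only [flipP, hsv, hcv]
  by_cases h1 : p ≤ (j : ℕ) + 1 ∧ (j : ℕ) + 1 < q <;>
    by_cases h2 : p ≤ (j : ℕ) ∧ (j : ℕ) < q
  · rw [if_pos h1, if_pos h2]
    rcases hj with h | h
    · left; rw [h]
    · right; rw [h]; ring
  · rw [if_pos h1, if_neg h2]
    have hpj : p = (j : ℕ) + 1 := by omega
    have e1 : idxN N p = j.succ := by apply Fin.ext; simp [idxN, Fin.val_succ]; omega
    have e2 : idxN N (p - 1) = j.castSucc := by apply Fin.ext; simp [idxN]; omega
    rw [e1, e2] at hup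
    left; rw [hup]; ring
  · rw [if_neg h1, if_pos h2]
    have hqj : q = (j : ℕ) + 1 := by omega
    have e1 : idxN N q = j.succ := by apply Fin.ext; simp [idxN, Fin.val_succ]; omega
    have e2 : idxN N (q - 1) = j.castSucc := by apply Fin.ext; simp [idxN]; omega
    rw [e1, e2] at hflat
    right; rw [hflat]; ring
  · rw [if_neg h1, if_neg h2]; exact hj

lemma step_count {N : ℕ} (hN : 2 ≤ N) {x y c : ℤ} {mj : ℕ} (hmjN : mj ≤ N)
    (hxc : x ≤ c) (hyc : y ≤ c + ((N : ℤ) - (mj : ℤ)))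
    (S : Set (Fin (N+1) → ℤ)) (hfin : S.Finite)
    (hmem : ∀ L ∈ S, IsBPath N L ∧ L 0 = x ∧ L (Fin.last N) = y)
    (hub : ∀ L ∈ S, L (idxN N mj) ≤ c + 1)
    (hclosed : ∀ L ∈ S, ∀ L' : Fin (N+1) → ℤ, IsBPath N L' → L' 0 = x →
        L' (Fin.last N) = y → (∀ i, L' i ≤ L i) → L' ∈ S) :
    S.ncard ≤ N ^ 2 * (S ∩ {L | L (idxN N mj) ≤ c}).ncard := by
  classical
  set T := S ∩ {L | L (idxN N mj) ≤ c} with hT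
  have hTfin : T.Finite := hfin.subset Set.inter_subset_left
  have key : ∀ L, L ∈ S → ¬ L (idxN N mj) ≤ c → ∃ w : ℕ × ℕ,
      1 ≤ w.1 ∧ w.1 ≤ mj ∧ mj < w.2 ∧ w.2 ≤ N ∧ flipP N L w.1 w.2 ∈ T := by
    intro L hLS hLc
    obtain ⟨hB, h0, hlast⟩ := hmem L hLS
    have hm : L (idxN N mj) = c + 1 :=
      le_antisymm (hub L hLS) (Int.add_one_le_iff.mpr (not_le.mp hLc))
    have h0' : L (idxN N 0) = x := by rw [idxN_zero]; exact h0
    have hN' : L (idxN N N) = y := by rw [idxN_last]; exact hlast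
    obtain ⟨p, hp0, hpm, hpup⟩ := exists_up hB mj 0 (Nat.zero_le _)
      (by rw [h0', hm]; linarith)
    obtain ⟨q, hq1, hq2, hqflat⟩ := exists_flat hB N mj hmjN
      (by rw [hN', hm]; push_cast; linarith)
    refine ⟨(p, q), hp0, hpm, hq1, hq2, ?_⟩
    have hbp : IsBPath N (flipP N L p q) :=
      flip_isBPath hB hp0 (lt_of_le_of_lt hpm hq1) hq2 hpup hqflat
    have h0f : flipP N L p q 0 = x := by
      have : ¬ (p ≤ ((0 : Fin (N+1)) : ℕ) ∧ ((0 : Fin (N+1)) : ℕ) < q) := by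
        simp only [Fin.val_zero]; omega
      simp only [flipP, if_neg this]; exact h0
    have hyf : flipP N L p q (Fin.last N) = y := by
      have : ¬ (p ≤ ((Fin.last N : Fin (N+1)) : ℕ) ∧ ((Fin.last N : Fin (N+1)) : ℕ) < q) := by
        simp only [Fin.val_last]; omega
      simp only [flipP, if_neg this]; exact hlast
    refine Set.mem_inter (hclosed L hLS _ hbp h0f hyf (flipP_le L p q)) ?_
    show flipP N L p q (idxN N mj) ≤ c
    have hvm : ((idxN N mj : Fin (N+1)) : ℕ) = mj := idxN_val_of_le hmjN
    have heq : flipP N L p q (idxN N mj) = L (idxN N mj) - 1 := by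
      simp only [flipP, hvm]
      rw [if_pos ⟨hpm, hq1⟩]
    rw [heq, hm]; linarith
  let F : ↥S → ↥T × Option (Fin mj × Fin (N - mj)) := fun L =>
    if h : (L : Fin (N+1) → ℤ) (idxN N mj) ≤ c then
      (⟨L, Set.mem_inter L.2 h⟩, none)
    else
      (⟨flipP N L (Classical.choose (key L L.2 h)).1 (Classical.choose (key L L.2 h)).2,
        (Classical.choose_spec (key L L.2 h)).2.2.2.2⟩,
       some (⟨(Classical.choose (key L L.2 h)).1 - 1, by
                obtain ⟨a1, a2, a3, a4, -⟩ := Classical.choose_spec (key L L.2 h); omega⟩,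
             ⟨(Classical.choose (key L L.2 h)).2 - mj - 1, by
                obtain ⟨a1, a2, a3, a4, -⟩ := Classical.choose_spec (key L L.2 h); omega⟩))
  have hFinj : Function.Injective F := by
    rintro ⟨L1, h1⟩ ⟨L2, h2⟩ hEq
    by_cases c1 : L1 (idxN N mj) ≤ c <;> by_cases c2 : L2 (idxN N mj) ≤ c
    · simp only [F, dif_pos c1, dif_pos c2, Prod.mk.injEq, Subtype.mk.injEq] at hEq
      exact Subtype.ext hEq.1
    · simp only [F, dif_pos c1, dif_neg c2, Prod.mk.injEq] at hEq
      exact absurd hEq.2 (by simp)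
    · simp only [F, dif_neg c1, dif_pos c2, Prod.mk.injEq] at hEq
      exact absurd hEq.2 (by simp)
    · simp only [F, dif_neg c1, dif_neg c2, Prod.mk.injEq, Subtype.mk.injEq,
        Option.some.injEq, Fin.mk.injEq] at hEq
      obtain ⟨hFlip, hp, hq⟩ := hEq
      obtain ⟨a1, a2, a3, a4, -⟩ := Classical.choose_spec (key L1 h1 c1)
      obtain ⟨b1, b2, b3, b4, -⟩ := Classical.choose_spec (key L2 h2 c2)
      have hpe : (Classical.choose (key L1 h1 c1)).1 = (Classical.choose (key L2 h2 c2)).1 := by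
        omega
      have hqe : (Classical.choose (key L1 h1 c1)).2 = (Classical.choose (key L2 h2 c2)).2 := by
        omega
      have r1 := flip_recover L1 (Classical.choose (key L1 h1 c1)).1
        (Classical.choose (key L1 h1 c1)).2
      have r2 := flip_recover L2 (Classical.choose (key L2 h2 c2)).1
        (Classical.choose (key L2 h2 c2)).2
      rw [hpe, hqe] at r1
      rw [hpe, hqe] at hFlip
      rw [hFlip] at r1
      exact Subtype.ext (r1.symm.trans r2)
  have hTsub : Finite ↥T := hTfin.to_subtype
  have hcard := Nat.card_le_card_of_injective F hFinj
  rw [Nat.card_prod] at hcard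
  have h1 : Nat.card ↥S = S.ncard := Nat.card_coe_set_eq S
  have h2 : Nat.card ↥T = T.ncard := Nat.card_coe_set_eq T
  have h3 : Nat.card (Option (Fin mj × Fin (N - mj))) = mj * (N - mj) + 1 := by
    simp [Nat.card_eq_fintype_card]
  rw [h1, h2, h3] at hcard
  have hfac : mj * (N - mj) + 1 ≤ N ^ 2 := by
    have hs : mj + (N - mj) = N := by omega
    nlinarith [Nat.sub_le N mj, sq_nonneg (mj + (N - mj))]
  calc S.ncard ≤ T.ncard * (mj * (N - mj) + 1) := hcard
    _ ≤ T.ncard * N ^ 2 := Nat.mul_le_mul_left _ hfac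
    _ = N ^ 2 * T.ncard := Nat.mul_comm _ _

def SbAux {d : ℕ} (N : ℕ) (Ω : Set (Fin (N+1) → ℤ)) (m : Fin d → ℕ) (β : Fin d → ℤ) :
    Set (Fin (N+1) → ℤ) :=
  Ω ∩ {L | ∀ j, L (idxN N (m j)) ≤ β j}

lemma chain_count {N d K : ℕ} (hN : 2 ≤ N) {x y : ℤ} {lam : Fin (N+1) → ℤ}
    {Ω : Set (Fin (N+1) → ℤ)} (hfin : Ω.Finite)
    {m : Fin d → ℕ} (hm : ∀ j, m j ≤ N)
    (hmem : ∀ L ∈ Ω, IsBPath N L ∧ L 0 = x ∧ L (Fin.last N) = y ∧ ∀ i, L i ≤ lam i)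
    (hclosed : ∀ L ∈ Ω, ∀ L' : Fin (N+1) → ℤ, IsBPath N L' → L' 0 = x → L' (Fin.last N) = y →
        (∀ i, L' i ≤ L i) → L' ∈ Ω)
    (hx : x ≤ 0)
    (hlamK : ∀ j, (K : ℤ) ≤ lam (idxN N (m j)))
    (hy : ∀ j, y ≤ (lam (idxN N (m j)) - K) + ((N : ℤ) - (m j : ℤ))) :
    Ω.ncard ≤ N ^ (2*d*K) *
      (Ω ∩ {L | ∀ j, L (idxN N (m j)) ≤ lam (idxN N (m j)) - K}).ncard := by
  classical
  have hstep : ∀ (β : Fin d → ℤ) (j : Fin d), lam (idxN N (m j)) - K ≤ β j - 1 →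
      (SbAux N Ω m β).ncard ≤ N ^ 2 * (SbAux N Ω m (Function.update β j (β j - 1))).ncard := by
    intro β j hβ
    have hEq : SbAux N Ω m (Function.update β j (β j - 1)) =
        SbAux N Ω m β ∩ {L | L (idxN N (m j)) ≤ β j - 1} := by
      ext L
      simp only [SbAux, Set.mem_inter_iff, Set.mem_setOf_eq, and_assoc]
      constructor
      · rintro ⟨hΩL, hall⟩
        refine ⟨hΩL, fun i => ?_, ?_⟩
        · have hi := hall i
          rw [Function.update_apply] at hi
          split_ifs at hi with h
          · subst h; linarith
          · exact hi
        · have hj := hall j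
          rwa [Function.update_self] at hj
      · rintro ⟨hΩL, hall, hj⟩
        refine ⟨hΩL, fun i => ?_⟩
        rw [Function.update_apply]
        split_ifs with h
        · subst h; exact hj
        · exact hall i
    rw [hEq]
    refine step_count (x := x) (y := y) hN (hm j) ?_ ?_ (SbAux N Ω m β)
      (hfin.subset Set.inter_subset_left) ?_ ?_ ?_
    · have := hlamK j; linarith
    · have := hy j; linarith
    · intro L hL
      have h := hmem L hL.1
      exact ⟨h.1, h.2.1, h.2.2.1⟩
    · intro L hL
      have := hL.2 j; linarith
    · rintro L ⟨hLΩ, hLb⟩ L' hb h0 hl hle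
      exact ⟨hclosed L hLΩ L' hb h0 hl hle,
        fun i => le_trans (hle _) (hLb i)⟩
  set Bf : ℕ → ℕ → (Fin d → ℤ) :=
    fun r k j => lam (idxN N (m j)) - (r : ℤ) - (if (j : ℕ) < k then 1 else 0) with hBf
  have inner : ∀ r : ℕ, r < K → ∀ k : ℕ, k ≤ d →
      (SbAux N Ω m (Bf r 0)).ncard ≤ N ^ (2*k) * (SbAux N Ω m (Bf r k)).ncard := by
    intro r hr k
    induction k with
    | zero => intro _; simpa using le_rfl
    | succ k ih =>
      intro hk
      have hkd : k < d := by omega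
      set j : Fin d := ⟨k, hkd⟩ with hj
      have hcond : lam (idxN N (m j)) - K ≤ Bf r k j - 1 := by
        simp only [hBf]
        rw [if_neg (by simp [hj])]
        push_cast
        omega
      have h1 := hstep (Bf r k) j hcond
      have h2 : Function.update (Bf r k) j (Bf r k j - 1) = Bf r (k+1) := by
        funext i
        rw [Function.update_apply]
        split_ifs with h
        · subst h
          simp only [hBf]
          rw [if_neg (by simp [hj]), if_pos (by simp [hj])]
          ring
        · simp only [hBf]
          have : ((i : ℕ) < k) ↔ ((i : ℕ) < k + 1) := by
            constructor
            · omega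
            · intro hlt
              rcases Nat.lt_succ_iff_lt_or_eq.mp hlt with h' | h'
              · exact h'
              · exfalso; apply h; apply Fin.ext; simp [hj, h']
          rcases Decidable.em ((i : ℕ) < k) with h' | h'
          · rw [if_pos h', if_pos (this.mp h')]
          · rw [if_neg h', if_neg (fun hh => h' (this.mpr hh))]
      rw [h2] at h1
      calc (SbAux N Ω m (Bf r 0)).ncard
          ≤ N ^ (2*k) * (SbAux N Ω m (Bf r k)).ncard := ih (by omega)
        _ ≤ N ^ (2*k) * (N ^ 2 * (SbAux N Ω m (Bf r (k+1))).ncard) :=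
            Nat.mul_le_mul_left _ h1
        _ = N ^ (2*(k+1)) * (SbAux N Ω m (Bf r (k+1))).ncard := by ring
  have hB00 : SbAux N Ω m (Bf 0 0) = Ω := by
    apply Set.inter_eq_left.mpr
    intro L hL j
    have := (hmem L hL).2.2.2 (idxN N (m j))
    simp only [hBf]
    rw [if_neg (by omega)]
    push_cast
    linarith
  have hBr : ∀ r : ℕ, Bf r d = Bf (r+1) 0 := by
    intro r
    funext j
    simp only [hBf]
    rw [if_pos j.isLt, if_neg (by omega)]
    push_cast
    ring
  have outer : ∀ r : ℕ, r ≤ K →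
      Ω.ncard ≤ N ^ (2*d*r) * (SbAux N Ω m (Bf r 0)).ncard := by
    intro r
    induction r with
    | zero => intro _; rw [hB00]; simpa using le_rfl
    | succ r ih =>
      intro h
      calc Ω.ncard ≤ N ^ (2*d*r) * (SbAux N Ω m (Bf r 0)).ncard := ih (by omega)
        _ ≤ N ^ (2*d*r) * (N ^ (2*d) * (SbAux N Ω m (Bf r d)).ncard) :=
            Nat.mul_le_mul_left _ (inner r (by omega) d le_rfl)
        _ = N ^ (2*d*(r+1)) * (SbAux N Ω m (Bf (r+1) 0)).ncard := by rw [hBr]; ring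
  have hfinal := outer K le_rfl
  have hBK : Bf K 0 = fun j => lam (idxN N (m j)) - K := by
    funext j
    simp only [hBf]
    rw [if_neg (by omega)]
    ring
  rw [hBK] at hfinal
  exact hfinal

/-- Step 1 of the proof of Proposition 3.9: conditioned on an upper barrier path `λ₁` pinned
in windows `[⌊u_j N⌋, ⌊v_j N⌋]` at the locations `⌊θ_j N⌋`, a Bernoulli random walk bridge
lies at least `⌈N^{3/4}⌉` below `λ₁` at `⌊θ_j N⌋` for `j = 1,…,d`, with probability at least
`N^{-2d⌈N^{3/4}⌉}`. -/
theorem stmt17 (d : ℕ) (hd : 1 ≤ d) (θ u v : Fin (d+1) → ℝ)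
    (hθ0 : 0 < θ 0) (hθmono : StrictMono θ) (hθlast : θ (Fin.last d) = 1)
    (hu0 : ∀ j, 0 < u j) (huv : ∀ j, u j < v j)
    (N : ℕ) (hN : 2 ≤ N)
    (hfloor1 : ∀ j : Fin (d+1),
      (Nat.ceil ((N : ℝ) ^ ((3 : ℝ)/4)) : ℤ) ≤ (Nat.floor (u j * N) : ℤ))
    (hfloor2 : ∀ j : Fin d,
      (Nat.floor (v (Fin.last d) * N) : ℤ) - (Nat.floor (u j.castSucc * N) : ℤ) +
          (Nat.ceil ((N : ℝ) ^ ((3 : ℝ)/4)) : ℤ) ≤ (N : ℤ) - (Nat.floor (θ j.castSucc * N) : ℤ))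
    (lam : Fin (N+1) → ℤ) (hlam : IsBPath N lam) (hlam0 : lam 0 = 0)
    (hlamval : ∀ j : Fin (d+1),
      (Nat.floor (u j * N) : ℤ) ≤ lam (idxN N (Nat.floor (θ j * N))) ∧
        lam (idxN N (Nat.floor (θ j * N))) ≤ (Nat.floor (v j * N) : ℤ))
    (x y : ℤ)
    (hne : (pathSetB N x y (fun j => (lam j : WithTop ℤ)) (fun _ => ⊥)).Nonempty) :
    unifProb (pathSetB N x y (fun j => (lam j : WithTop ℤ)) (fun _ => ⊥))
        {L | ∀ j : Fin d,
          L (idxN N (Nat.floor (θ j.castSucc * N))) ≤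
            lam (idxN N (Nat.floor (θ j.castSucc * N))) -
              (Nat.ceil ((N : ℝ) ^ ((3 : ℝ)/4)) : ℤ)} ≥
      (N : ℝ) ^ (-(2 * (d : ℤ) * (Nat.ceil ((N : ℝ) ^ ((3 : ℝ)/4)) : ℤ))) := by
  classical
  set K : ℕ := Nat.ceil ((N : ℝ) ^ ((3 : ℝ)/4)) with hKdef
  set Ω : Set (Fin (N+1) → ℤ) :=
    pathSetB N x y (fun j => (lam j : WithTop ℤ)) (fun _ => ⊥) with hΩdef
  have hΩmem : ∀ L : Fin (N+1) → ℤ, L ∈ Ω ↔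
      IsBPath N L ∧ L 0 = x ∧ L (Fin.last N) = y ∧ ∀ i, L i ≤ lam i := by
    intro L
    constructor
    · rintro ⟨hb, h0, hl, hf, -⟩
      exact ⟨hb, h0, hl, fun i => by simpa using hf i⟩
    · rintro ⟨hb, h0, hl, hf⟩
      exact ⟨hb, h0, hl, fun i => by simpa using hf i, fun i => bot_le⟩
  obtain ⟨L₀, hL₀⟩ := hne
  have hL₀' := (hΩmem L₀).mp hL₀
  have hx0 : x ≤ 0 := by
    have h := hL₀'.2.2.2 0
    rw [hL₀'.2.1, hlam0] at h
    exact h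
  -- the locations
  set m : Fin d → ℕ := fun j => Nat.floor (θ j.castSucc * N) with hmdef
  have hθle1 : ∀ j : Fin d, θ j.castSucc ≤ 1 := by
    intro j
    have h := (hθmono (Fin.castSucc_lt_last j)).le
    rwa [hθlast] at h
  have hmle : ∀ j : Fin d, m j ≤ N := by
    intro j
    have h1 : θ j.castSucc * N ≤ (N : ℝ) := by
      have := mul_le_mul_of_nonneg_right (hθle1 j) (Nat.cast_nonneg (α := ℝ) N)
      simpa using this
    calc m j ≤ Nat.floor ((N : ℝ)) := Nat.floor_le_floor h1
      _ = N := Nat.floor_natCast N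
  have hlamK : ∀ j : Fin d, (K : ℤ) ≤ lam (idxN N (m j)) :=
    fun j => le_trans (hfloor1 j.castSucc) (hlamval j.castSucc).1
  have hylam : y ≤ (Nat.floor (v (Fin.last d) * N) : ℤ) := by
    have hidxlast : idxN N (Nat.floor (θ (Fin.last d) * N)) = Fin.last N := by
      rw [hθlast, one_mul]
      rw [Nat.floor_natCast]
      exact idxN_last
    have h1 := (hlamval (Fin.last d)).2
    rw [hidxlast] at h1
    have h2 := hL₀'.2.2.2 (Fin.last N)
    rw [hL₀'.2.2.1] at h2
    linarith
  have hyfeas : ∀ j : Fin d,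
      y ≤ (lam (idxN N (m j)) - K) + ((N : ℤ) - (m j : ℤ)) := by
    intro j
    have h2 := hfloor2 j
    have hu := (hlamval j.castSucc).1
    have : (m j : ℤ) = (Nat.floor (θ j.castSucc * N) : ℤ) := by rw [hmdef]
    rw [this]
    linarith
  -- finiteness
  have hΩfin : Ω.Finite := by
    apply Set.Finite.subset
      (Set.Finite.pi (t := fun _ : Fin (N+1) => Set.Icc x (x + (N : ℤ)))
        (fun _ => Set.finite_Icc _ _))
    intro L hL
    have h := (hΩmem L).mp hL
    rw [Set.mem_pi]
    intro i _
    rw [Set.mem_Icc]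
    constructor
    · have h1 : L (idxN N 0) ≤ L (idxN N (i : ℕ)) := bmono h.1 (Nat.zero_le _)
      rw [idxN_zero, idxN_self] at h1
      rw [← h.2.1]
      exact h1
    · have h2 := bub h.1 (i : ℕ)
      rw [idxN_zero, idxN_self, h.2.1] at h2
      have h3 : ((i : ℕ) : ℤ) ≤ (N : ℤ) := by exact_mod_cast Nat.le_of_lt_succ i.isLt
      linarith
  -- main counting result
  have hmain := chain_count (K := K) hN hΩfin hmle
    (fun L hL => (hΩmem L).mp hL)
    (by
      intro L hL L' hb h0 hl hle
      refine (hΩmem L').mpr ⟨hb, h0, hl, fun i => le_trans (hle i) (((hΩmem L).mp hL).2.2.2 i)⟩)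
    hx0 hlamK hyfeas
  -- positivity
  have hΩpos : 0 < Ω.ncard := (Set.ncard_pos hΩfin).mpr ⟨L₀, hL₀⟩
  set A : Set (Fin (N+1) → ℤ) :=
    {L | ∀ j : Fin d, L (idxN N (m j)) ≤ lam (idxN N (m j)) - (K : ℤ)} with hAdef
  have hmain' : Ω.ncard ≤ N ^ (2*d*K) * (Ω ∩ A).ncard := hmain
  have hApos : 0 < (Ω ∩ A).ncard := by
    rcases Nat.eq_zero_or_pos ((Ω ∩ A).ncard) with h | h
    · rw [h, Nat.mul_zero] at hmain'; omega
    · exact h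
  -- final arithmetic
  have goal_eq : unifProb Ω A = ((Ω ∩ A).ncard : ℝ) / (Ω.ncard : ℝ) := rfl
  rw [ge_iff_le]
  have hrw : (N : ℝ) ^ (-(2 * (d : ℤ) * (K : ℤ))) = ((N ^ (2*d*K) : ℕ) : ℝ)⁻¹ := by
    rw [zpow_neg]
    congr 1
    rw [show (2 * (d : ℤ) * (K : ℤ)) = ((2*d*K : ℕ) : ℤ) by push_cast; ring, zpow_natCast]
    push_cast
    ring
  rw [hrw, goal_eq]
  have hB : (0 : ℝ) < ((N ^ (2*d*K) : ℕ) : ℝ) := by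
    have : 0 < N ^ (2*d*K) := Nat.pow_pos (by omega)
    exact_mod_cast this
  have hΩR : (0 : ℝ) < (Ω.ncard : ℝ) := by exact_mod_cast hΩpos
  rw [inv_eq_one_div, div_le_div_iff₀ hB hΩR]
  have : (Ω.ncard : ℝ) ≤ ((Ω ∩ A).ncard : ℝ) * ((N ^ (2*d*K) : ℕ) : ℝ) := by
    have := hmain'
    have hcast : (Ω.ncard : ℝ) ≤ ((N ^ (2*d*K) * (Ω ∩ A).ncard : ℕ) : ℝ) := by
      exact_mod_cast this
    rw [Nat.cast_mul] at hcast
    linarith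
  linarith
end

section
/- Fix N∈ℕ. (1) Suppose g^b, g^t : {0,…,N}→ℤ∪{−∞} with g^b(j)≤g^t(j) for all j, and x^b≤x^t, y^b≤y^t in ℤ, and that Ω(N,x^b,y^b,∞,g^b) and Ω(N,x^t,y^t,∞,g^t) are nonempty. Then there exists a probability measure π on pairs (L^b,L^t) of Bernoulli paths whose first marginal is P^{N,x^b,y^b,∞,g^b}, whose second marginal is P^{N,x^t,y^t,∞,g^t}, and such that π( L^b(j)≤L^t(j) for all 0≤j≤N ) = 1. (2) Suppose f^b, f^t : {0,…,N}→ℤ∪{∞} with f^b(j)≤f^t(j) for all j, and x^b≤x^t, y^b≤y^t in ℤ, and that Ω(N,x^b,y^b,f^b,−∞) and Ω(N,x^t,y^t,f^t,−∞) are nonempty. Then there exists a probability measure π on pairs (L^b,L^t) whose first marginal is P^{N,x^b,y^b,f^b,−∞}, whose second marginal is P^{N,x^t,y^t,f^t,−∞}, and such that π( L^b(j)≤L^t(j) for all 0≤j≤N ) = 1. -/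
open scoped Classical
open scoped FinsetFamily

section coupling
variable {α : Type*} [DistribLattice α] [DecidableEq α]

/-- Counting elements of a product `↥C × Fin k` whose first coordinate satisfies `P`. -/
lemma card_filter_fst (C : Finset α) (k : ℕ) (P : α → Prop) [DecidablePred P] :
    (Finset.univ.filter fun y : {x // x ∈ C} × Fin k => P ↑y.1).card
      = (C.filter P).card * k := by
  have h : (Finset.univ.filter fun y : {x // x ∈ C} × Fin k => P ↑y.1).card
      = ((C.filter P) ×ˢ (Finset.univ : Finset (Fin k))).card := by
    refine Finset.card_bij (fun y _ => ((y.1 : α), y.2)) ?_ ?_ ?_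
    · rintro ⟨⟨a, ha⟩, i⟩ hy
      simp only [Finset.mem_filter, Finset.mem_univ, true_and] at hy
      simp [Finset.mem_product, ha, hy]
    · rintro ⟨⟨a, ha⟩, i⟩ h1 ⟨⟨a', ha'⟩, i'⟩ h2 heq
      simp only [Prod.mk.injEq] at heq
      simp [Prod.ext_iff, Subtype.ext_iff, heq.1, heq.2]
    · rintro ⟨a, i⟩ hy
      simp only [Finset.mem_product, Finset.mem_filter] at hy
      exact ⟨⟨⟨a, hy.1.1⟩, i⟩, by simp [hy.1.2], rfl⟩
  simp [h, Finset.card_product]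

set_option maxHeartbeats 1000000 in
/-- Existence of a monotone coupling of the uniform measures on two finite nonempty
subsets `A, B` of a distributive lattice satisfying `A ⊓ B ⊆ A` and `A ⊔ B ⊆ B`. -/
lemma exists_coupling (A B : Finset α) (hA : A.Nonempty) (hB : B.Nonempty)
    (hinf : ∀ a ∈ A, ∀ b ∈ B, a ⊓ b ∈ A) (hsup : ∀ a ∈ A, ∀ b ∈ B, a ⊔ b ∈ B) :
    ∃ π : α × α → ℝ, (∀ p, 0 ≤ π p) ∧
      (∀ p, π p ≠ 0 → p.1 ∈ A ∧ p.2 ∈ B ∧ p.1 ≤ p.2) ∧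
      (∀ a, ∑' b, π (a, b) = if a ∈ A then (A.card : ℝ)⁻¹ else 0) ∧
      (∀ b, ∑' a, π (a, b) = if b ∈ B then (B.card : ℝ)⁻¹ else 0) := by
  set n := A.card with hn
  set m := B.card with hm
  have hn0 : 0 < n := Finset.card_pos.2 hA
  have hm0 : 0 < m := Finset.card_pos.2 hB
  have hn0' : ((n : ℝ)) ≠ 0 := by positivity
  have hm0' : ((m : ℝ)) ≠ 0 := by positivity
  -- the bipartite graph on blown-up copies
  set ι := {x // x ∈ A} × Fin m with hι
  set κ := {x // x ∈ B} × Fin n with hκ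
  set t : ι → Finset κ := fun x => Finset.univ.filter fun y => (x.1 : α) ≤ (y.1 : α) with ht
  -- Hall's condition
  have hall : ∀ S : Finset ι, S.card ≤ (S.biUnion t).card := by
    intro S
    set A' := S.image fun x => (x.1 : α) with hA'
    have hA'A : A' ⊆ A := by
      intro a ha
      simp only [hA', Finset.mem_image] at ha
      obtain ⟨x, -, rfl⟩ := ha
      exact x.1.2
    set P : α → Prop := fun b => ∃ a ∈ A', a ≤ b with hP
    -- step 1 : |S| ≤ |A'| * m
    have h1 : S.card ≤ A'.card * m := by
      calc S.card ≤ (A' ×ˢ (Finset.univ : Finset (Fin m))).card := by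
            refine Finset.card_le_card_of_injOn (fun x => ((x.1 : α), x.2)) ?_ ?_
            · intro x hx
              simp only [Finset.mem_coe, Finset.mem_product, Finset.mem_univ, and_true]
              exact Finset.mem_image_of_mem (fun x : ι => (x.1 : α)) hx
            · rintro ⟨⟨a, ha⟩, i⟩ - ⟨⟨a', ha'⟩, i'⟩ - h
              simp only [Prod.mk.injEq] at h
              simp [Prod.ext_iff, Subtype.ext_iff, h.1, h.2]
        _ = A'.card * m := by simp [Finset.card_product]
    -- step 2 : Daykin's inequality gives |A'| * |B| ≤ |A| * |B'|
    have h2 : A'.card * m ≤ n * (B.filter P).card := by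
      have daykin := Finset.le_card_infs_mul_card_sups A' B
      have hi : A' ⊼ B ⊆ A := by
        intro c hc
        rw [Finset.mem_infs] at hc
        obtain ⟨a, ha, b, hb, rfl⟩ := hc
        exact hinf a (hA'A ha) b hb
      have hs : A' ⊻ B ⊆ B.filter P := by
        intro c hc
        rw [Finset.mem_sups] at hc
        obtain ⟨a, ha, b, hb, rfl⟩ := hc
        exact Finset.mem_filter.2 ⟨hsup a (hA'A ha) b hb, a, ha, le_sup_left⟩
      calc A'.card * m ≤ (A' ⊼ B).card * (A' ⊻ B).card := daykin
        _ ≤ n * (B.filter P).card :=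
            Nat.mul_le_mul (Finset.card_le_card hi) (Finset.card_le_card hs)
    -- step 3 : the filtered copies sit inside the biUnion
    have h3 : (B.filter P).card * n ≤ (S.biUnion t).card := by
      rw [← card_filter_fst B n P]
      refine Finset.card_le_card ?_
      intro y hy
      simp only [Finset.mem_filter, Finset.mem_univ, true_and, hP] at hy
      obtain ⟨a, ha, hab⟩ := hy
      simp only [hA', Finset.mem_image] at ha
      obtain ⟨x, hx, rfl⟩ := ha
      exact Finset.mem_biUnion.2 ⟨x, hx, by simp [ht, hab]⟩
    calc S.card ≤ A'.card * m := h1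
      _ ≤ n * (B.filter P).card := h2
      _ = (B.filter P).card * n := Nat.mul_comm _ _
      _ ≤ (S.biUnion t).card := h3
  obtain ⟨f, hfinj, hft⟩ := (Finset.all_card_le_biUnion_card_iff_exists_injective t).1 hall
  have hcards : Fintype.card ι = Fintype.card κ := by
    simp [hι, hκ, Fintype.card_coe, Nat.mul_comm]
    rfl
  have hfbij : Function.Bijective f :=
    (Fintype.bijective_iff_injective_and_card f).2 ⟨hfinj, hcards⟩
  -- the coupling
  set π : α × α → ℝ := fun p =>
    ((Finset.univ.filter fun x : ι => (((x.1 : α), ((f x).1 : α)) = p)).card : ℝ)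
      / ((n : ℝ) * m) with hπ
  refine ⟨π, ?_, ?_, ?_, ?_⟩
  · intro p
    rw [hπ]
    positivity
  · intro p hp
    have hne : (Finset.univ.filter fun x : ι => (((x.1 : α), ((f x).1 : α)) = p)).Nonempty := by
      by_contra h
      rw [Finset.not_nonempty_iff_eq_empty] at h
      rw [hπ] at hp
      simp only [h, Finset.card_empty, Nat.cast_zero, zero_div] at hp
      exact hp rfl
    obtain ⟨x, hx⟩ := hne
    simp only [Finset.mem_filter, Finset.mem_univ, true_and, Prod.ext_iff] at hx
    have hle : (x.1 : α) ≤ ((f x).1 : α) := by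
      have h := hft x
      rw [ht] at h
      simpa using h
    exact ⟨hx.1 ▸ x.1.2, hx.2 ▸ (f x).1.2, hx.1 ▸ hx.2 ▸ hle⟩
  · -- first marginal
    intro a
    have hzero : ∀ b ∉ B, π (a, b) = 0 := by
      intro b hb
      have hemp : (Finset.univ.filter fun x : ι =>
          (((x.1 : α), ((f x).1 : α)) = (a, b))) = ∅ := by
        rw [Finset.eq_empty_iff_forall_notMem]
        intro x hx
        simp only [Finset.mem_filter, Prod.ext_iff] at hx
        exact hb (hx.2.2 ▸ (f x).1.2)
      rw [hπ]
      simp only [hemp, Finset.card_empty, Nat.cast_zero, zero_div]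
    rw [tsum_eq_sum hzero]
    have hkey : ∀ b : α, ((Finset.univ.filter fun x : ι => (x.1 : α) = a).filter
        fun x => ((f x).1 : α) = b)
        = Finset.univ.filter fun x : ι => (((x.1 : α), ((f x).1 : α)) = (a, b)) := by
      intro b
      rw [Finset.filter_filter]
      apply Finset.filter_congr
      intro x _
      simp [Prod.ext_iff]
    have hfib : (Finset.univ.filter fun x : ι => (x.1 : α) = a).card
        = ∑ b ∈ B, ((Finset.univ.filter fun x : ι => (x.1 : α) = a).filter
            fun x => ((f x).1 : α) = b).card :=
      Finset.card_eq_sum_card_fiberwise fun x _ => (f x).1.2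
    have hcount : (Finset.univ.filter fun x : ι => (x.1 : α) = a).card
        = if a ∈ A then m else 0 := by
      rw [card_filter_fst A m (fun c => c = a), Finset.filter_eq']
      split_ifs with ha <;> simp
    have htotal : ∑ b ∈ B, (Finset.univ.filter fun x : ι =>
        (((x.1 : α), ((f x).1 : α)) = (a, b))).card = if a ∈ A then m else 0 := by
      calc ∑ b ∈ B, (Finset.univ.filter fun x : ι =>
            (((x.1 : α), ((f x).1 : α)) = (a, b))).card
          = ∑ b ∈ B, ((Finset.univ.filter fun x : ι => (x.1 : α) = a).filter
              fun x => ((f x).1 : α) = b).card :=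
            Finset.sum_congr rfl fun b _ => by rw [hkey b]
        _ = (Finset.univ.filter fun x : ι => (x.1 : α) = a).card := hfib.symm
        _ = if a ∈ A then m else 0 := hcount
    simp only [hπ]
    rw [← Finset.sum_div, ← Nat.cast_sum, htotal]
    split_ifs with ha
    · rw [mul_comm ((n : ℝ)) ((m : ℝ)), ← div_div, div_self hm0', one_div]
    · simp
  · -- second marginal
    intro b
    have hzero : ∀ a ∉ A, π (a, b) = 0 := by
      intro a ha
      have hemp : (Finset.univ.filter fun x : ι =>
          (((x.1 : α), ((f x).1 : α)) = (a, b))) = ∅ := by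
        rw [Finset.eq_empty_iff_forall_notMem]
        intro x hx
        simp only [Finset.mem_filter, Prod.ext_iff] at hx
        exact ha (hx.2.1 ▸ x.1.2)
      rw [hπ]
      simp only [hemp, Finset.card_empty, Nat.cast_zero, zero_div]
    rw [tsum_eq_sum hzero]
    have hkey : ∀ a : α, ((Finset.univ.filter fun x : ι => ((f x).1 : α) = b).filter
        fun x => (x.1 : α) = a)
        = Finset.univ.filter fun x : ι => (((x.1 : α), ((f x).1 : α)) = (a, b)) := by
      intro a
      rw [Finset.filter_filter]
      apply Finset.filter_congr
      intro x _
      simp only [Prod.ext_iff]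
      tauto
    have hfib : (Finset.univ.filter fun x : ι => ((f x).1 : α) = b).card
        = ∑ a ∈ A, ((Finset.univ.filter fun x : ι => ((f x).1 : α) = b).filter
            fun x => (x.1 : α) = a).card :=
      Finset.card_eq_sum_card_fiberwise fun x _ => x.1.2
    have hmove : (Finset.univ.filter fun x : ι => ((f x).1 : α) = b).card
        = (Finset.univ.filter fun y : κ => (y.1 : α) = b).card := by
      refine Finset.card_bij (fun x _ => f x) ?_ ?_ ?_
      · intro x hx
        simp only [Finset.mem_filter, Finset.mem_univ, true_and] at hx ⊢
        exact hx
      · intro x h1 x' h2 h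
        exact hfinj h
      · intro y hy
        obtain ⟨x, rfl⟩ := hfbij.2 y
        simp only [Finset.mem_filter, Finset.mem_univ, true_and] at hy
        exact ⟨x, by simp [hy], rfl⟩
    have hcount : (Finset.univ.filter fun y : κ => (y.1 : α) = b).card
        = if b ∈ B then n else 0 := by
      rw [card_filter_fst B n (fun c => c = b), Finset.filter_eq']
      split_ifs with hb <;> simp
    have htotal : ∑ a ∈ A, (Finset.univ.filter fun x : ι =>
        (((x.1 : α), ((f x).1 : α)) = (a, b))).card = if b ∈ B then n else 0 := by
      calc ∑ a ∈ A, (Finset.univ.filter fun x : ι =>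
            (((x.1 : α), ((f x).1 : α)) = (a, b))).card
          = ∑ a ∈ A, ((Finset.univ.filter fun x : ι => ((f x).1 : α) = b).filter
              fun x => (x.1 : α) = a).card :=
            Finset.sum_congr rfl fun a _ => by rw [hkey a]
        _ = (Finset.univ.filter fun x : ι => ((f x).1 : α) = b).card := hfib.symm
        _ = (Finset.univ.filter fun y : κ => (y.1 : α) = b).card := hmove
        _ = if b ∈ B then n else 0 := hcount
    simp only [hπ]
    rw [← Finset.sum_div, ← Nat.cast_sum, htotal]
    split_ifs with hb
    · rw [← div_div, div_self hn0', one_div]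
    · simp

end coupling

lemma isBPath_bounds {N : ℕ} {L : Fin (N+1) → ℤ} (h : IsBPath N L) :
    ∀ n : ℕ, ∀ hn : n < N + 1, L 0 ≤ L ⟨n, hn⟩ ∧ L ⟨n, hn⟩ ≤ L 0 + n := by
  intro n
  induction n with
  | zero =>
    intro hn
    have h0 : (⟨0, hn⟩ : Fin (N+1)) = 0 := rfl
    simp [h0]
  | succ k ih =>
    intro hn
    have hkN : k < N := by omega
    have hk : k < N + 1 := by omega
    have hstep := h ⟨k, hkN⟩
    have hsucc : (Fin.succ ⟨k, hkN⟩ : Fin (N+1)) = ⟨k+1, hn⟩ := rfl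
    have hcast : (Fin.castSucc ⟨k, hkN⟩ : Fin (N+1)) = ⟨k, hk⟩ := rfl
    rw [hsucc, hcast] at hstep
    have hih := ih hk
    push_cast
    push_cast at hih
    omega

lemma IsBPath.inf {N : ℕ} {L M : Fin (N+1) → ℤ} (hL : IsBPath N L) (hM : IsBPath N M) :
    IsBPath N (L ⊓ M) := by
  intro j
  have h1 := hL j
  have h2 := hM j
  simp only [Pi.inf_apply]
  rcases h1 with h1 | h1 <;> rcases h2 with h2 | h2 <;> rw [h1, h2] <;> omega

lemma IsBPath.sup {N : ℕ} {L M : Fin (N+1) → ℤ} (hL : IsBPath N L) (hM : IsBPath N M) :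
    IsBPath N (L ⊔ M) := by
  intro j
  have h1 := hL j
  have h2 := hM j
  simp only [Pi.sup_apply]
  rcases h1 with h1 | h1 <;> rcases h2 with h2 | h2 <;> rw [h1, h2] <;> omega

lemma pathSetB_finite (N : ℕ) (x y : ℤ) (f : Fin (N+1) → WithTop ℤ)
    (g : Fin (N+1) → WithBot ℤ) : (pathSetB N x y f g).Finite := by
  refine Set.Finite.subset (Set.Finite.pi (fun _ : Fin (N+1) => Set.finite_Icc x (x + N))) ?_
  intro L hL
  obtain ⟨hB, h0, -, -, -⟩ := hL
  rw [Set.mem_pi]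
  intro j _
  rw [Set.mem_Icc]
  have hb := isBPath_bounds hB j.1 j.2
  rw [Fin.eta] at hb
  rw [h0] at hb
  have hjN : (j : ℕ) ≤ N := by omega
  constructor
  · exact hb.1
  · refine hb.2.trans ?_
    have : ((j : ℕ) : ℤ) ≤ (N : ℤ) := by exact_mod_cast hjN
    omega

/-- `π` is a monotone coupling of the uniform measures on `Ωb` and `Ωt`:
it is a probability mass function on pairs of paths, supported on ordered pairs,
whose marginals are the two uniform measures. -/
def IsMonotoneCoupling (N : ℕ) (Ωb Ωt : Set (Fin (N+1) → ℤ))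
    (π : ((Fin (N+1) → ℤ) × (Fin (N+1) → ℤ)) → ℝ) : Prop :=
  (∀ p, 0 ≤ π p) ∧
  (∀ p, π p ≠ 0 → p.1 ∈ Ωb ∧ p.2 ∈ Ωt ∧ ∀ j, p.1 j ≤ p.2 j) ∧
  (∀ Lb, ∑' Lt, π (Lb, Lt) = (if Lb ∈ Ωb then ((Ωb.ncard : ℝ))⁻¹ else 0)) ∧
  (∀ Lt, ∑' Lb, π (Lb, Lt) = (if Lt ∈ Ωt then ((Ωt.ncard : ℝ))⁻¹ else 0))

/-- Packaging: from the abstract lattice coupling to a monotone coupling of path sets. -/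
lemma isMonotoneCoupling_of_closure (N : ℕ) (Sb St : Set (Fin (N+1) → ℤ))
    (hfb : Sb.Finite) (hft : St.Finite) (hb : Sb.Nonempty) (ht : St.Nonempty)
    (hinf : ∀ a ∈ Sb, ∀ b ∈ St, a ⊓ b ∈ Sb)
    (hsup : ∀ a ∈ Sb, ∀ b ∈ St, a ⊔ b ∈ St) :
    ∃ π, IsMonotoneCoupling N Sb St π := by
  obtain ⟨π, h0, h1, h2, h3⟩ := exists_coupling hfb.toFinset hft.toFinset
    ((Set.Finite.toFinset_nonempty hfb).2 hb) ((Set.Finite.toFinset_nonempty hft).2 ht)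
    (by
      intro a ha b hbmem
      rw [Set.Finite.mem_toFinset] at *
      exact hinf a ha b hbmem)
    (by
      intro a ha b hbmem
      rw [Set.Finite.mem_toFinset] at *
      exact hsup a ha b hbmem)
  refine ⟨π, h0, ?_, ?_, ?_⟩
  · intro p hp
    obtain ⟨hpa, hpb, hple⟩ := h1 p hp
    exact ⟨(Set.Finite.mem_toFinset hfb).1 hpa, (Set.Finite.mem_toFinset hft).1 hpb,
      fun j => hple j⟩
  · intro Lb
    rw [h2 Lb, Set.ncard_eq_toFinset_card _ hfb]
    exact if_congr (Set.Finite.mem_toFinset hfb) rfl rfl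
  · intro Lt
    rw [h3 Lt, Set.ncard_eq_toFinset_card _ hft]
    exact if_congr (Set.Finite.mem_toFinset hft) rfl rfl

/-- Lemma 3.3: monotone couplings of Bernoulli random walk bridges, (1) with lower barriers,
(2) with upper barriers. -/
theorem stmt19 (N : ℕ) :
    (∀ (gB gT : Fin (N+1) → WithBot ℤ) (xb xt yb yt : ℤ),
      (∀ j, gB j ≤ gT j) → xb ≤ xt → yb ≤ yt →
      (pathSetB N xb yb (fun _ => ⊤) gB).Nonempty →
      (pathSetB N xt yt (fun _ => ⊤) gT).Nonempty →
      ∃ π, IsMonotoneCoupling N (pathSetB N xb yb (fun _ => ⊤) gB)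
        (pathSetB N xt yt (fun _ => ⊤) gT) π) ∧
    (∀ (fB fT : Fin (N+1) → WithTop ℤ) (xb xt yb yt : ℤ),
      (∀ j, fB j ≤ fT j) → xb ≤ xt → yb ≤ yt →
      (pathSetB N xb yb fB (fun _ => ⊥)).Nonempty →
      (pathSetB N xt yt fT (fun _ => ⊥)).Nonempty →
      ∃ π, IsMonotoneCoupling N (pathSetB N xb yb fB (fun _ => ⊥))
        (pathSetB N xt yt fT (fun _ => ⊥)) π) := by
  constructor
  · -- lower barriers
    intro gB gT xb xt yb yt hg hx hy hΩb hΩt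
    refine isMonotoneCoupling_of_closure N _ _ (pathSetB_finite N xb yb _ gB)
      (pathSetB_finite N xt yt _ gT) hΩb hΩt ?_ ?_
    · rintro a ⟨hBa, ha0, haN, -, hag⟩ b ⟨hBb, hb0, hbN, -, hbg⟩
      refine ⟨hBa.inf hBb, ?_, ?_, fun j => le_top, ?_⟩
      · simp [Pi.inf_apply, ha0, hb0, min_eq_left hx]
      · simp [Pi.inf_apply, haN, hbN, min_eq_left hy]
      · intro j
        rcases le_total (a j) (b j) with h | h
        · simpa [Pi.inf_apply, min_eq_left h] using hag j
        · have hh : gB j ≤ (b j : WithBot ℤ) := le_trans (hg j) (hbg j)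
          simpa [Pi.inf_apply, min_eq_right h] using hh
    · rintro a ⟨hBa, ha0, haN, -, hag⟩ b ⟨hBb, hb0, hbN, -, hbg⟩
      refine ⟨hBa.sup hBb, ?_, ?_, fun j => le_top, ?_⟩
      · simp [Pi.sup_apply, ha0, hb0, max_eq_right hx]
      · simp [Pi.sup_apply, haN, hbN, max_eq_right hy]
      · intro j
        rcases le_total (a j) (b j) with h | h
        · simpa [Pi.sup_apply, max_eq_right h] using hbg j
        · have hh : gT j ≤ (a j : WithBot ℤ) :=
            le_trans (hbg j) (WithBot.coe_le_coe.2 h)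
          simpa [Pi.sup_apply, max_eq_left h] using hh
  · -- upper barriers
    intro fB fT xb xt yb yt hf hx hy hΩb hΩt
    refine isMonotoneCoupling_of_closure N _ _ (pathSetB_finite N xb yb fB _)
      (pathSetB_finite N xt yt fT _) hΩb hΩt ?_ ?_
    · rintro a ⟨hBa, ha0, haN, haf, -⟩ b ⟨hBb, hb0, hbN, hbf, -⟩
      refine ⟨hBa.inf hBb, ?_, ?_, ?_, fun j => bot_le⟩
      · simp [Pi.inf_apply, ha0, hb0, min_eq_left hx]
      · simp [Pi.inf_apply, haN, hbN, min_eq_left hy]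
      · intro j
        rcases le_total (a j) (b j) with h | h
        · simpa [Pi.inf_apply, min_eq_left h] using haf j
        · have hh : (b j : WithTop ℤ) ≤ fB j :=
            le_trans (WithTop.coe_le_coe.2 h) (haf j)
          simpa [Pi.inf_apply, min_eq_right h] using hh
    · rintro a ⟨hBa, ha0, haN, haf, -⟩ b ⟨hBb, hb0, hbN, hbf, -⟩
      refine ⟨hBa.sup hBb, ?_, ?_, ?_, fun j => bot_le⟩
      · simp [Pi.sup_apply, ha0, hb0, max_eq_right hx]
      · simp [Pi.sup_apply, haN, hbN, max_eq_right hy]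
      · intro j
        rcases le_total (a j) (b j) with h | h
        · simpa [Pi.sup_apply, max_eq_right h] using hbf j
        · have hh : (a j : WithTop ℤ) ≤ fT j := le_trans (haf j) (hf j)
          simpa [Pi.sup_apply, max_eq_left h] using hh
end
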